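/- The Wick rotation intertwines the Poisson brackets of different signatures: with W(z^P z̄^Q) = i^{∑_{k=s}^n(P_k+Q_k)} z^P z̄^Q and the Poisson bracket {z^P z̄^Q, z^R z̄^S}_ν = (1/i) ∑_{k=0}^n ν_k (Q_k R_k - P_k S_k) z^{P+R-E_k} z̄^{Q+S-E_k}, one has W({f,g}_{ν^{(s)}}) = {W(f), W(g)}_{ν^{(1+n)}} for all polynomials f,g. -/

import Mathlib

open scoped BigOperators

namespace WickPoisson

/-- Multiindices `P ∈ ℕ₀^{1+n}`. -/
abbrev Multi (n : ℕ) := Fin (n + 1) → ℕ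

/-- Index of the monomial `z^P z̄^Q`. -/
abbrev Idx (n : ℕ) := Multi n × Multi n

/-- The polynomial algebra, as the free `ℂ`-module with basis the monomials `z^P z̄^Q`. -/
abbrev Poly (n : ℕ) := Idx n →₀ ℂ

/-- The Poisson bracket of two basis monomials:
`{z^P z̄^Q, z^R z̄^S}_ν = (1/i) ∑_k ν_k (Q_k R_k - P_k S_k) z^{P+R-E_k} z̄^{Q+S-E_k}`. -/
noncomputable def pbMonom {n : ℕ} (ν : Fin (n + 1) → ℤ) (PQ RS : Idx n) : Poly n :=
  ∑ k, Finsupp.single (PQ.1 + RS.1 - Pi.single k 1, PQ.2 + RS.2 - Pi.single k 1)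
    (Complex.I⁻¹ * (ν k : ℂ)
      * ((PQ.2 k : ℂ) * (RS.1 k : ℂ) - (PQ.1 k : ℂ) * (RS.2 k : ℂ)))

/-- The bilinear extension of the Poisson bracket to all polynomials. -/
noncomputable def poisson {n : ℕ} (ν : Fin (n + 1) → ℤ) (f g : Poly n) : Poly n :=
  f.sum fun pq a => g.sum fun rs b => (a * b) • pbMonom ν pq rs

/-- The Wick-rotation degree `∑_{k=s}^n (P_k + Q_k)` of a monomial `z^P z̄^Q`. -/
def wdeg {n : ℕ} (s : ℕ) (pq : Idx n) : ℕ :=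
  ∑ k ∈ Finset.univ.filter (fun k : Fin (n + 1) => s ≤ (k : ℕ)), (pq.1 k + pq.2 k)

/-- The Wick rotation `W(z^P z̄^Q) = i^{∑_{k=s}^n (P_k+Q_k)} z^P z̄^Q`, extended
`ℂ`-linearly. -/
noncomputable def wrot {n : ℕ} (s : ℕ) (f : Poly n) : Poly n :=
  f.sum fun pq a => Finsupp.single pq (Complex.I ^ wdeg s pq * a)

end WickPoisson

namespace WickPoisson

open Complex

lemma wrot_apply {n : ℕ} (s : ℕ) (f : Poly n) (x : Idx n) :
    wrot s f x = Complex.I ^ wdeg s x * f x := by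
  classical
  unfold wrot
  rw [Finsupp.sum_apply]
  rw [Finsupp.sum_eq_single x (fun b _ hb => by simp [Finsupp.single_apply, hb])
    (by simp)]
  simp

lemma wrot_single {n : ℕ} (s : ℕ) (pq : Idx n) (a : ℂ) :
    wrot s (Finsupp.single pq a) = Finsupp.single pq (Complex.I ^ wdeg s pq * a) := by
  ext x
  rcases eq_or_ne x pq with rfl | h
  · simp [wrot_apply]
  · simp [wrot_apply, Finsupp.single_apply, h, h.symm]

lemma wrot_zero {n : ℕ} (s : ℕ) : wrot (n := n) s 0 = 0 := by
  ext x; simp [wrot_apply]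

lemma wrot_add {n : ℕ} (s : ℕ) (f g : Poly n) :
    wrot s (f + g) = wrot s f + wrot s g := by
  ext x; simp [wrot_apply, mul_add]

lemma wrot_smul {n : ℕ} (s : ℕ) (c : ℂ) (f : Poly n) :
    wrot s (c • f) = c • wrot s f := by
  ext x; simp [wrot_apply]; ring

lemma wrot_sum {n : ℕ} (s : ℕ) {ι : Type*} (t : Finset ι) (h : ι → Poly n) :
    wrot s (∑ k ∈ t, h k) = ∑ k ∈ t, wrot s (h k) := by
  ext x
  simp [wrot_apply, Finset.mul_sum]

lemma poisson_zero_left {n : ℕ} (ν : Fin (n+1) → ℤ) (g : Poly n) :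
    poisson ν 0 g = 0 := by
  simp [poisson]

lemma poisson_zero_right {n : ℕ} (ν : Fin (n+1) → ℤ) (f : Poly n) :
    poisson ν f 0 = 0 := by
  simp [poisson]

lemma poisson_add_left {n : ℕ} (ν : Fin (n+1) → ℤ) (f f' g : Poly n) :
    poisson ν (f + f') g = poisson ν f g + poisson ν f' g := by
  classical
  unfold poisson
  apply Finsupp.sum_add_index
  · intro pq _; simp
  · intro pq _ a a'
    rw [← Finsupp.sum_add]
    apply Finsupp.sum_congr
    intro rs _
    rw [add_mul, add_smul]

lemma poisson_add_right {n : ℕ} (ν : Fin (n+1) → ℤ) (f g g' : Poly n) :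
    poisson ν f (g + g') = poisson ν f g + poisson ν f g' := by
  classical
  unfold poisson
  rw [← Finsupp.sum_add]
  apply Finsupp.sum_congr
  intro pq _
  apply Finsupp.sum_add_index
  · intro rs _; simp
  · intro rs _ b b'
    rw [mul_add, add_smul]

lemma poisson_single_single {n : ℕ} (ν : Fin (n+1) → ℤ) (pq rs : Idx n) (a b : ℂ) :
    poisson ν (Finsupp.single pq a) (Finsupp.single rs b) = (a * b) • pbMonom ν pq rs := by
  classical
  unfold poisson
  rw [Finsupp.sum_single_index (by simp), Finsupp.sum_single_index (by simp)]

lemma wrot_pbMonom {n s : ℕ} (pq rs : Idx n) :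
    wrot s (pbMonom (fun k : Fin (n + 1) => if (k : ℕ) < s then 1 else -1) pq rs)
      = (Complex.I ^ (wdeg s pq + wdeg s rs)) • pbMonom (fun _ : Fin (n+1) => (1 : ℤ)) pq rs := by
  classical
  unfold pbMonom
  rw [wrot_sum, Finset.smul_sum]
  apply Finset.sum_congr rfl
  intro k _
  rw [wrot_single, Finsupp.smul_single]
  set A : ℂ := (pq.2 k : ℂ) * (rs.1 k : ℂ) - (pq.1 k : ℂ) * (rs.2 k : ℂ) with hA
  by_cases hA0 : A = 0
  · rw [hA0]; simp
  congr 1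
  have hP : 1 ≤ pq.1 k + rs.1 k := by
    by_contra h
    have h1 : pq.1 k = 0 ∧ rs.1 k = 0 := by omega
    apply hA0
    rw [hA, h1.1, h1.2]
    push_cast
    ring
  have hQ : 1 ≤ pq.2 k + rs.2 k := by
    by_contra h
    have h1 : pq.2 k = 0 ∧ rs.2 k = 0 := by omega
    apply hA0
    rw [hA, h1.1, h1.2]
    push_cast
    ring
  set F := Finset.univ.filter (fun k : Fin (n + 1) => s ≤ (k : ℕ)) with hF
  have hsum : wdeg s pq + wdeg s rs
      = ∑ k' ∈ F, ((pq.1 k' + rs.1 k') + (pq.2 k' + rs.2 k')) := by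
    rw [wdeg, wdeg, ← Finset.sum_add_distrib]
    apply Finset.sum_congr rfl
    intro k' _
    ring
  by_cases hk : (k : ℕ) < s
  · -- k not in F, Pi.single k 1 vanishes on F
    have hdeg : wdeg s (pq.1 + rs.1 - Pi.single k 1, pq.2 + rs.2 - Pi.single k 1)
        = wdeg s pq + wdeg s rs := by
      rw [hsum, wdeg]
      apply Finset.sum_congr rfl
      intro k' hk'
      have hne : k' ≠ k := by
        rintro rfl
        simp only [hF, Finset.mem_filter] at hk'
        omega
      simp [Pi.single_apply, hne]
    rw [hdeg]
    simp [hk]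
  · -- k in F
    push_neg at hk
    have hkF : k ∈ F := by simp [hF, hk]
    have hdeg : wdeg s (pq.1 + rs.1 - Pi.single k 1, pq.2 + rs.2 - Pi.single k 1) + 2
        = wdeg s pq + wdeg s rs := by
      rw [hsum, wdeg]
      rw [← Finset.sum_erase_add F _ hkF, ← Finset.sum_erase_add F _ hkF]
      have herase : ∑ k' ∈ F.erase k,
          ((pq.1 + rs.1 - Pi.single k 1 : Multi n) k' + (pq.2 + rs.2 - Pi.single k 1 : Multi n) k')
          = ∑ k' ∈ F.erase k, ((pq.1 k' + rs.1 k') + (pq.2 k' + rs.2 k')) := by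
        apply Finset.sum_congr rfl
        intro k' hk'
        have hne : k' ≠ k := Finset.ne_of_mem_erase hk'
        simp [Pi.single_apply, hne]
      rw [herase]
      have hterm : ((pq.1 + rs.1 - Pi.single k 1 : Multi n)) k + ((pq.2 + rs.2 - Pi.single k 1 : Multi n)) k
          = (pq.1 k + rs.1 k) + (pq.2 k + rs.2 k) - 2 := by
        simp only [Pi.sub_apply, Pi.add_apply, Pi.single_eq_same]
        omega
      rw [hterm]
      omega
    have hI : Complex.I ^ (wdeg s pq + wdeg s rs)
        = - Complex.I ^ wdeg s (pq.1 + rs.1 - Pi.single k 1, pq.2 + rs.2 - Pi.single k 1) := by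
      rw [← hdeg, pow_add]
      simp [Complex.I_sq]
    rw [hI]
    have hns : ¬ (k : ℕ) < s := by omega
    simp [hns]

end WickPoisson

/-- The Wick rotation intertwines the Poisson brackets of signature
`s` (sign vector `ν_k = 1` for `k < s`, `ν_k = -1` for `k ≥ s`) and signature `1+n`
(all `ν_k = 1`):  `W({f,g}_{ν^{(s)}}) = {W(f), W(g)}_{ν^{(1+n)}}` for all polynomials
`f, g`. -/
theorem wick_rotation_intertwines_poisson_brackets
    (n s : ℕ) (hs1 : 1 ≤ s) (hs2 : s ≤ n + 1) (f g : WickPoisson.Poly n) :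
    WickPoisson.wrot s
        (WickPoisson.poisson (fun k : Fin (n + 1) => if (k : ℕ) < s then 1 else -1) f g)
      = WickPoisson.poisson (fun _ : Fin (n + 1) => (1 : ℤ))
          (WickPoisson.wrot s f) (WickPoisson.wrot s g) := by
  classical
  induction f using Finsupp.induction_linear with
  | zero => simp [WickPoisson.poisson_zero_left, WickPoisson.wrot_zero]
  | add f f' hf hf' =>
      rw [WickPoisson.poisson_add_left, WickPoisson.wrot_add, hf, hf',
        WickPoisson.wrot_add, WickPoisson.poisson_add_left]
  | single pq a =>
      induction g using Finsupp.induction_linear with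
      | zero => simp [WickPoisson.poisson_zero_right, WickPoisson.wrot_zero]
      | add g g' hg hg' =>
          rw [WickPoisson.poisson_add_right, WickPoisson.wrot_add, hg, hg',
            WickPoisson.wrot_add, WickPoisson.poisson_add_right]
      | single rs b =>
          rw [WickPoisson.poisson_single_single, WickPoisson.wrot_smul,
            WickPoisson.wrot_single, WickPoisson.wrot_single,
            WickPoisson.poisson_single_single, WickPoisson.wrot_pbMonom, smul_smul]
          congr 1
          rw [pow_add]
          ring
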